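/- Let h : ℝⁿ → ℝ be continuously differentiable, let ψ₁, …, ψ_p : ℝⁿ → ℝⁿ (p ≥ 1) be continuous, let γ : ℝ → ℝ be an extended class-K function, let f : ℝⁿ → ℝⁿ, u : ℝⁿ → ℝᵐ, g : ℝⁿ → (ℝᵐ →L ℝⁿ) be continuous, and suppose that for all x ∈ ℝⁿ, ⟪∇h(x), f(x) + g(x)(u(x))⟫ ≥ -γ(h(x)) - min_{1 ≤ i ≤ p} ⟪∇h(x), ψᵢ(x)⟫. Then for every differentiable curve x : [0, ∞) → ℝⁿ satisfying x′(t) - f(x(t)) - g(x(t))(u(x(t))) ∈ convexHull{ψ₁(x(t)), …, ψ_p(x(t))} for all t ≥ 0, and at every time t with h(x(t)) < 0, the function t ↦ h(x(t)) has strictly positive derivative at t. -/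

import Mathlib

open scoped RealInnerProductSpace

/-- **Strict increase of the barrier value along disturbed trajectories outside the
safe set.** Under the RCBF inequality, for every differentiable trajectory of
`ẋ ∈ f(x) + g(x)u(x) + co{ψ₁(x), …, ψ_p(x)}` on `[0, ∞)` and every time `t ≥ 0`
with `h(x(t)) < 0`, the function `t ↦ h(x(t))` has a strictly positive derivative
at `t`. -/
theorem rcbf_strict_increase_outside_safe_set {n m p : ℕ} (hp : 0 < p)
    (h : EuclideanSpace ℝ (Fin n) → ℝ) (hh : ContDiff ℝ 1 h)
    (ψ : Fin p → EuclideanSpace ℝ (Fin n) → EuclideanSpace ℝ (Fin n))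
    (hψ : ∀ i, Continuous (ψ i))
    (γ : ℝ → ℝ) (hγcont : Continuous γ) (hγmono : StrictMono γ) (hγ0 : γ 0 = 0)
    (f : EuclideanSpace ℝ (Fin n) → EuclideanSpace ℝ (Fin n)) (hf : Continuous f)
    (u : EuclideanSpace ℝ (Fin n) → EuclideanSpace ℝ (Fin m)) (hu : Continuous u)
    (g : EuclideanSpace ℝ (Fin n) → (EuclideanSpace ℝ (Fin m) →L[ℝ] EuclideanSpace ℝ (Fin n)))
    (hg : Continuous g)
    (hRCBF : ∀ x : EuclideanSpace ℝ (Fin n),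
      ⟪gradient h x, f x + g x (u x)⟫ ≥
        -γ (h x) - Finset.univ.inf' ⟨⟨0, hp⟩, Finset.mem_univ _⟩
          (fun i : Fin p => ⟪gradient h x, ψ i x⟫))
    (x x' : ℝ → EuclideanSpace ℝ (Fin n))
    (hx : ∀ t ∈ Set.Ici (0 : ℝ), HasDerivAt x (x' t) t)
    (hincl : ∀ t ∈ Set.Ici (0 : ℝ),
      x' t - f (x t) - g (x t) (u (x t)) ∈
        convexHull ℝ (Set.range fun i : Fin p => ψ i (x t))) :
    ∀ t ∈ Set.Ici (0 : ℝ), h (x t) < 0 →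
      ∃ d : ℝ, 0 < d ∧ HasDerivAt (fun s : ℝ => h (x s)) d t := by
  intro t ht hneg
  set v := gradient h (x t) with hv
  set w := x' t - f (x t) - g (x t) (u (x t)) with hw
  set M : ℝ := Finset.univ.inf' ⟨⟨0, hp⟩, Finset.mem_univ _⟩
      (fun i : Fin p => ⟪v, ψ i (x t)⟫) with hM
  -- linear functional ⟪v, ·⟫ is bounded below by M on the convex hull
  have hlin : IsLinearMap ℝ (fun z : EuclideanSpace ℝ (Fin n) => ⟪v, z⟫) :=
    ⟨fun a b => inner_add_right .., fun r a => real_inner_smul_right ..⟩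
  have hconv : Convex ℝ {z : EuclideanSpace ℝ (Fin n) | M ≤ ⟪v, z⟫} :=
    convex_halfSpace_ge hlin M
  have hsub : Set.range (fun i : Fin p => ψ i (x t)) ⊆
      {z : EuclideanSpace ℝ (Fin n) | M ≤ ⟪v, z⟫} := by
    rintro _ ⟨i, rfl⟩
    exact Finset.inf'_le (fun i : Fin p => ⟪v, ψ i (x t)⟫) (Finset.mem_univ i)
  have hwM : M ≤ ⟪v, w⟫ := convexHull_min hsub hconv (hincl t ht)
  -- the derivative of h ∘ x at t
  have hd : HasDerivAt (fun s : ℝ => h (x s)) ⟪v, x' t⟫ t := by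
    have := ((hh.differentiable one_ne_zero (x t)).hasGradientAt.hasFDerivAt).comp_hasDerivAt t
      (hx t ht)
    simp only [InnerProductSpace.toDual_apply_apply, hv, gradient, InnerProductSpace.toDual_symm_apply, LinearIsometryEquiv.apply_symm_apply] at this ⊢
    exact this
  refine ⟨⟪v, x' t⟫, ?_, hd⟩
  have hsplit : x' t = (f (x t) + g (x t) (u (x t))) + w := by
    rw [hw]; abel
  have hinner : ⟪v, x' t⟫ = ⟪v, f (x t) + g (x t) (u (x t))⟫ + ⟪v, w⟫ := by
    rw [hsplit, inner_add_right]
  have hγneg : γ (h (x t)) < 0 := by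
    have := hγmono hneg
    rwa [hγ0] at this
  have h1 : ⟪v, f (x t) + g (x t) (u (x t))⟫ ≥ -γ (h (x t)) - M := hRCBF (x t)
  have : ⟪v, x' t⟫ ≥ -γ (h (x t)) := by
    rw [hinner]
    linarith
  linarith
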